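/- Let G = {G^L | G^R} be a short dicotic game. If A and B are both left options of G with A ≼ B (mod D⁻), then G = {G^L \ {A} | G^R} (mod D⁻), i.e., removing the dominated left option A does not change the equivalence class of G modulo D⁻. -/

import Mathlib

universe u

namespace SetTheory

/-- Restored from Mathlib (Dec 2024): pre-games. -/
inductive PGame : Type (u + 1)
  | mk : ∀ α β : Type u, (α → PGame) → (β → PGame) → PGame

namespace PGame

def LeftMoves : PGame → Type u
  | mk l _ _ _ => l

def RightMoves : PGame → Type u
  | mk _ r _ _ => r

def moveLeft : ∀ g : PGame, LeftMoves g → PGame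
  | mk _l _ L _ => L

def moveRight : ∀ g : PGame, RightMoves g → PGame
  | mk _ _r _ R => R

inductive IsOption : PGame → PGame → Prop
  | moveLeft {x : PGame} (i : x.LeftMoves) : IsOption (x.moveLeft i) x
  | moveRight {x : PGame} (i : x.RightMoves) : IsOption (x.moveRight i) x

def Identical : PGame.{u} → PGame.{u} → Prop
  | mk _ _ xL xR, mk _ _ yL yR =>
    Relator.BiTotal (fun i j ↦ Identical (xL i) (yL j)) ∧
      Relator.BiTotal (fun i j ↦ Identical (xR i) (yR j))

noncomputable def birthday : PGame.{u} → Ordinal.{u}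
  | ⟨_, _, xL, xR⟩ =>
    max (Ordinal.lsub.{u, u} fun i => birthday (xL i))
      (Ordinal.lsub.{u, u} fun i => birthday (xR i))

theorem birthday_moveLeft_lt {x : PGame} (i : x.LeftMoves) :
    (x.moveLeft i).birthday < x.birthday := by
  cases x; rw [birthday]; exact lt_max_of_lt_left (Ordinal.lt_lsub _ i)

theorem birthday_moveRight_lt {x : PGame} (i : x.RightMoves) :
    (x.moveRight i).birthday < x.birthday := by
  cases x; rw [birthday]; exact lt_max_of_lt_right (Ordinal.lt_lsub _ i)

instance : Zero PGame :=
  ⟨⟨PEmpty, PEmpty, PEmpty.elim, PEmpty.elim⟩⟩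

def star : PGame.{u} :=
  ⟨PUnit, PUnit, fun _ => 0, fun _ => 0⟩

def neg : PGame → PGame
  | ⟨l, r, L, R⟩ => ⟨r, l, fun i => neg (R i), fun i => neg (L i)⟩

instance : Neg PGame :=
  ⟨neg⟩

noncomputable instance : Add PGame.{u} :=
  ⟨fun x y => by
    induction x generalizing y with | mk xl xr _ _ IHxl IHxr => _
    induction y with | mk yl yr yL yR IHyl IHyr => _
    have y := mk yl yr yL yR
    refine ⟨xl ⊕ yl, xr ⊕ yr, Sum.rec ?_ ?_, Sum.rec ?_ ?_⟩
    · exact fun i => IHxl i y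
    · exact IHyl
    · exact fun i => IHxr i y
    · exact IHyr⟩

end PGame

end SetTheory

open SetTheory PGame

namespace MisereDicot

def Follower (G' G : PGame) : Prop := Relation.ReflTransGen PGame.IsOption G' G

def IsShort (G : PGame) : Prop :=
  ∀ G', Follower G' G → Finite G'.LeftMoves ∧ Finite G'.RightMoves

def Dicot (G : PGame) : Prop :=
  ∀ G', Follower G' G → (IsEmpty G'.LeftMoves ↔ IsEmpty G'.RightMoves)

mutual
def LeftWinsFirst (G : PGame) : Prop :=
  IsEmpty G.LeftMoves ∨ ∃ i, ¬ RightWinsFirst (G.moveLeft i)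
termination_by G.birthday
decreasing_by exact PGame.birthday_moveLeft_lt i

def RightWinsFirst (G : PGame) : Prop :=
  IsEmpty G.RightMoves ∨ ∃ j, ¬ LeftWinsFirst (G.moveRight j)
termination_by G.birthday
decreasing_by exact PGame.birthday_moveRight_lt j
end

inductive MOutcome : Type
  | L | N | P | R
deriving DecidableEq

instance : LE MOutcome := ⟨fun a b => a = b ∨ a = .R ∨ b = .L⟩

noncomputable def outcome (G : PGame) : MOutcome := by
  classical
  exact if LeftWinsFirst G then (if RightWinsFirst G then .N else .L)
        else (if RightWinsFirst G then .R else .P)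

def Dge (G H : PGame) : Prop :=
  ∀ X : PGame, IsShort X → Dicot X → outcome (H + X) ≤ outcome (G + X)

def Deq (G H : PGame) : Prop :=
  ∀ X : PGame, IsShort X → Dicot X → outcome (G + X) = outcome (H + X)

def Dgt (G H : PGame) : Prop := Dge G H ∧ ¬ Deq G H

def DInvertible (G : PGame) : Prop :=
  ∃ H : PGame, IsShort H ∧ Dicot H ∧ Deq (G + H) 0

/-- The left option `G^L_i` is reversible through its right option `(G^L_i)^R_j ≼ G`. -/
def LeftReversibleAt (G : PGame) (i : G.LeftMoves) (j : (G.moveLeft i).RightMoves) : Prop :=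
  Dge G ((G.moveLeft i).moveRight j)

def RightReversibleAt (G : PGame) (j : G.RightMoves) (i : (G.moveRight j).LeftMoves) : Prop :=
  Dge ((G.moveRight j).moveLeft i) G

/-- `G` has a dominated left option (removable by the Domination theorem). -/
def LeftDominated (G : PGame) : Prop :=
  ∃ i i' : G.LeftMoves, ¬ (G.moveLeft i).Identical (G.moveLeft i') ∧
    Dge (G.moveLeft i') (G.moveLeft i)

def RightDominated (G : PGame) : Prop :=
  ∃ j j' : G.RightMoves, ¬ (G.moveRight j).Identical (G.moveRight j') ∧
    Dge (G.moveRight j) (G.moveRight j')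

/-- `G` has a non-atomic reversible left option (bypassable). -/
def LeftNonAtomicReversible (G : PGame) : Prop :=
  ∃ i j, LeftReversibleAt G i j ∧ Nonempty ((G.moveLeft i).moveRight j).LeftMoves

def RightNonAtomicReversible (G : PGame) : Prop :=
  ∃ j i, RightReversibleAt G j i ∧ Nonempty ((G.moveRight j).moveLeft i).RightMoves

/-- `G` has an atomic-reversible left option to which the atomic-reversibility
replacement applies nontrivially (i.e. changing the set of options): either some
other left option is a winning first move for Left (so the option is removable),
or the option is not already `*`. -/
def LeftAtomicReducible (G : PGame) : Prop :=
  ∃ i j, LeftReversibleAt G i j ∧ IsEmpty ((G.moveLeft i).moveRight j).LeftMoves ∧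
    ((∃ i', ¬ (G.moveLeft i').Identical (G.moveLeft i) ∧ ¬ RightWinsFirst (G.moveLeft i')) ∨
      ¬ (G.moveLeft i).Identical star)

def RightAtomicReducible (G : PGame) : Prop :=
  ∃ j i, RightReversibleAt G j i ∧ IsEmpty ((G.moveRight j).moveLeft i).RightMoves ∧
    ((∃ j', ¬ (G.moveRight j').Identical (G.moveRight j) ∧ ¬ LeftWinsFirst (G.moveRight j')) ∨
      ¬ (G.moveRight j).Identical star)

/-- The Substitution theorem applies to `G`: `G = {A | C}` with `A` an
atomic-reversible left option and `C` an atomic-reversible right option. -/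
def SubstitutionReducible (G : PGame) : Prop :=
  (∀ i i' : G.LeftMoves, (G.moveLeft i).Identical (G.moveLeft i')) ∧
  (∀ j j' : G.RightMoves, (G.moveRight j).Identical (G.moveRight j')) ∧
  (∃ i j, LeftReversibleAt G i j ∧ IsEmpty ((G.moveLeft i).moveRight j).LeftMoves) ∧
  (∃ j i, RightReversibleAt G j i ∧ IsEmpty ((G.moveRight j).moveLeft i).RightMoves)

/-- `G` is in canonical form: no follower admits any of the misère-dicot
simplifications (domination, non-atomic reversibility, atomic reversibility,
substitution) producing an equivalent game with a different set of options. -/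
def CanonicalForm (G : PGame) : Prop :=
  ∀ G', Follower G' G →
    ¬ (LeftDominated G' ∨ RightDominated G' ∨
       LeftNonAtomicReversible G' ∨ RightNonAtomicReversible G' ∨
       LeftAtomicReducible G' ∨ RightAtomicReducible G' ∨
       SubstitutionReducible G')

/-- The game `*2 = {0, * | 0, *}`. -/
def star2 : PGame :=
  PGame.mk Bool Bool (fun b => cond b star 0) (fun b => cond b star 0)

open Classical in
/-- The adjoint `G°` of `G`. -/
noncomputable def adjoint : PGame → PGame
  | PGame.mk l r L R =>
    if IsEmpty l ∧ IsEmpty r then star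
    else if IsEmpty l then PGame.mk r PUnit (fun j => adjoint (R j)) (fun _ => 0)
    else if IsEmpty r then PGame.mk PUnit l (fun _ => 0) (fun i => adjoint (L i))
    else PGame.mk r l (fun j => adjoint (R j)) (fun i => adjoint (L i))

/-- A universe of short games: a class closed under taking options, disjunctive
sums and conjugates. -/
structure GameUniverse where
  mem : PGame → Prop
  short_mem : ∀ G, mem G → IsShort G
  isOption_mem : ∀ G G', mem G → PGame.IsOption G' G → mem G'
  add_mem : ∀ G H, mem G → mem H → mem (G + H)
  neg_mem : ∀ G, mem G → mem (-G)

/-- `G ≽ H` modulo the universe `U`. -/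
def UGe (U : GameUniverse) (G H : PGame) : Prop :=
  ∀ X : PGame, U.mem X → outcome (H + X) ≤ outcome (G + X)

/-- `G = H` modulo the universe `U`. -/
def UEq (U : GameUniverse) (G H : PGame) : Prop :=
  ∀ X : PGame, U.mem X → outcome (G + X) = outcome (H + X)

/-- `G ≻ H` modulo the universe `U`. -/
def UGt (U : GameUniverse) (G H : PGame) : Prop := UGe U G H ∧ ¬ UEq U G H

/-- `J` is invertible in the universe `U`. -/
def UInvertible (U : GameUniverse) (J : PGame) : Prop :=
  ∃ J' : PGame, U.mem J' ∧ UEq U (J + J') 0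

lemma lwf_def (G : PGame) :
    LeftWinsFirst G ↔ (IsEmpty G.LeftMoves ∨ ∃ i, ¬ RightWinsFirst (G.moveLeft i)) := by
  rw [LeftWinsFirst]

lemma rwf_def (G : PGame) :
    RightWinsFirst G ↔ (IsEmpty G.RightMoves ∨ ∃ j, ¬ LeftWinsFirst (G.moveRight j)) := by
  rw [RightWinsFirst]

lemma identical_add_right : ∀ (z) {x y : PGame}, PGame.Identical x y →
    PGame.Identical (x + z) (y + z)
  | PGame.mk zl zr zL zR, PGame.mk xl xr xL xR, PGame.mk yl yr yL yR, h => by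
    have h' := h
    obtain ⟨⟨hl1, hl2⟩, ⟨hr1, hr2⟩⟩ := h
    refine ⟨⟨?_, ?_⟩, ⟨?_, ?_⟩⟩
    · rintro (i | k)
      · obtain ⟨j, hj⟩ := hl1 i
        exact ⟨Sum.inl j, identical_add_right (PGame.mk zl zr zL zR) hj⟩
      · exact ⟨Sum.inr k, identical_add_right (zL k) h'⟩
    · rintro (j | k)
      · obtain ⟨i, hi⟩ := hl2 j
        exact ⟨Sum.inl i, identical_add_right (PGame.mk zl zr zL zR) hi⟩
      · exact ⟨Sum.inr k, identical_add_right (zL k) h'⟩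
    · rintro (i | k)
      · obtain ⟨j, hj⟩ := hr1 i
        exact ⟨Sum.inl j, identical_add_right (PGame.mk zl zr zL zR) hj⟩
      · exact ⟨Sum.inr k, identical_add_right (zR k) h'⟩
    · rintro (j | k)
      · obtain ⟨i, hi⟩ := hr2 j
        exact ⟨Sum.inl i, identical_add_right (PGame.mk zl zr zL zR) hi⟩
      · exact ⟨Sum.inr k, identical_add_right (zR k) h'⟩
termination_by z x => (x.birthday, z.birthday)
decreasing_by
  all_goals first
    | exact Prod.Lex.left _ _ (PGame.birthday_moveLeft_lt _)
    | exact Prod.Lex.left _ _ (PGame.birthday_moveRight_lt _)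
    | exact Prod.Lex.right _ (PGame.birthday_moveLeft_lt _)
    | exact Prod.Lex.right _ (PGame.birthday_moveRight_lt _)

lemma identical_iff' {x y : PGame} : x.Identical y ↔
    Relator.BiTotal (fun i j => (x.moveLeft i).Identical (y.moveLeft j)) ∧
      Relator.BiTotal (fun i j => (x.moveRight i).Identical (y.moveRight j)) := by
  cases x; cases y; exact Iff.rfl

lemma ident_wins : ∀ {x y : PGame}, PGame.Identical x y →
    ((LeftWinsFirst x ↔ LeftWinsFirst y) ∧ (RightWinsFirst x ↔ RightWinsFirst y))
  | x, y, h => by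
    obtain ⟨⟨hl1, hl2⟩, hr1, hr2⟩ := identical_iff'.mp h
    constructor
    · rw [lwf_def, lwf_def]
      constructor
      · rintro (he | ⟨i, hi⟩)
        · exact Or.inl ⟨fun j => (hl2 j).elim fun i _ => he.false i⟩
        · obtain ⟨j, hj⟩ := hl1 i
          exact Or.inr ⟨j, fun hw => hi ((ident_wins hj).2.mpr hw)⟩
      · rintro (he | ⟨j, hj⟩)
        · exact Or.inl ⟨fun i => (hl1 i).elim fun j _ => he.false j⟩
        · obtain ⟨i, hi⟩ := hl2 j
          exact Or.inr ⟨i, fun hw => hj ((ident_wins hi).2.mp hw)⟩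
    · rw [rwf_def, rwf_def]
      constructor
      · rintro (he | ⟨i, hi⟩)
        · exact Or.inl ⟨fun j => (hr2 j).elim fun i _ => he.false i⟩
        · obtain ⟨j, hj⟩ := hr1 i
          exact Or.inr ⟨j, fun hw => hi ((ident_wins hj).1.mpr hw)⟩
      · rintro (he | ⟨j, hj⟩)
        · exact Or.inl ⟨fun i => (hr1 i).elim fun j _ => he.false j⟩
        · obtain ⟨i, hi⟩ := hr2 j
          exact Or.inr ⟨i, fun hw => hj ((ident_wins hi).1.mp hw)⟩
termination_by x => x.birthday
decreasing_by
  all_goals first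
    | exact PGame.birthday_moveLeft_lt _
    | exact PGame.birthday_moveRight_lt _

lemma mle_def {a b : MOutcome} : a ≤ b ↔ (a = b ∨ a = .R ∨ b = .L) := Iff.rfl

lemma not_rwf_mono {a b : PGame} (h : outcome a ≤ outcome b) (ha : ¬ RightWinsFirst a) :
    ¬ RightWinsFirst b := by
  intro hb
  have ea : outcome a = MOutcome.L ∨ outcome a = MOutcome.P := by
    unfold outcome; by_cases la : LeftWinsFirst a <;> simp [la, ha]
  have eb : outcome b = MOutcome.N ∨ outcome b = MOutcome.R := by
    unfold outcome; by_cases lb : LeftWinsFirst b <;> simp [lb, hb]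
  rw [mle_def] at h
  rcases ea with ea | ea <;> rcases eb with eb | eb <;> rw [ea, eb] at h <;> simp_all

lemma outcome_congr {a b : PGame} (hl : LeftWinsFirst a ↔ LeftWinsFirst b)
    (hr : RightWinsFirst a ↔ RightWinsFirst b) : outcome a = outcome b := by
  unfold outcome
  split_ifs <;> tauto

lemma key (xl xr : Type) (xL : xl → PGame) (xR : xr → PGame)
    (iA iB : xl) (hne : ¬ (xL iB).Identical (xL iA)) (hAB : Dge (xL iB) (xL iA)) :
    ∀ X : PGame, IsShort X → Dicot X →
      ((LeftWinsFirst (PGame.mk xl xr xL xR + X) ↔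
        LeftWinsFirst (PGame.mk {i : xl // ¬ (xL i).Identical (xL iA)} xr (fun i => xL i.1) xR + X)) ∧
       (RightWinsFirst (PGame.mk xl xr xL xR + X) ↔
        RightWinsFirst (PGame.mk {i : xl // ¬ (xL i).Identical (xL iA)} xr (fun i => xL i.1) xR + X)))
  | PGame.mk yl yr yL yR, hs, hd => by
    classical
    have recL : ∀ k : yl, _ := fun k =>
      key xl xr xL xR iA iB hne hAB (yL k)
        (fun G' hf => hs G' (hf.tail (@PGame.IsOption.moveLeft (PGame.mk yl yr yL yR) k)))
        (fun G' hf => hd G' (hf.tail (@PGame.IsOption.moveLeft (PGame.mk yl yr yL yR) k)))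
    have recR : ∀ k : yr, _ := fun k =>
      key xl xr xL xR iA iB hne hAB (yR k)
        (fun G' hf => hs G' (hf.tail (@PGame.IsOption.moveRight (PGame.mk yl yr yL yR) k)))
        (fun G' hf => hd G' (hf.tail (@PGame.IsOption.moveRight (PGame.mk yl yr yL yR) k)))
    refine ⟨⟨?_, ?_⟩, ?_, ?_⟩
    · intro h
      rw [lwf_def] at h ⊢
      obtain he | ⟨i, hi⟩ := h
      · exact Or.inl ⟨fun s => Sum.casesOn s (fun i => he.false (Sum.inl i.1))
          (fun k => he.false (Sum.inr k))⟩
      · obtain i | k := i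
        · by_cases hid : (xL i).Identical (xL iA)
          · have h1 : ¬ RightWinsFirst (xL iA + PGame.mk yl yr yL yR) := fun hw =>
              hi ((ident_wins (identical_add_right (PGame.mk yl yr yL yR) hid)).2.mpr hw)
            exact Or.inr ⟨Sum.inl ⟨iB, hne⟩,
              not_rwf_mono (hAB (PGame.mk yl yr yL yR) hs hd) h1⟩
          · exact Or.inr ⟨Sum.inl ⟨i, hid⟩, hi⟩
        · exact Or.inr ⟨Sum.inr k, fun hw => hi ((recL k).2.mpr hw)⟩
    · intro h
      rw [lwf_def] at h ⊢
      obtain he | ⟨i, hi⟩ := h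
      · exact (he.false (Sum.inl ⟨iB, hne⟩)).elim
      · obtain ⟨i, hi2⟩ | k := i
        · exact Or.inr ⟨Sum.inl i, hi⟩
        · exact Or.inr ⟨Sum.inr k, fun hw => hi ((recL k).2.mp hw)⟩
    · intro h
      rw [rwf_def] at h ⊢
      obtain he | ⟨j, hj⟩ := h
      · exact Or.inl ⟨fun s => he.false s⟩
      · obtain j | k := j
        · exact Or.inr ⟨Sum.inl j, hj⟩
        · exact Or.inr ⟨Sum.inr k, fun hw => hj ((recR k).1.mpr hw)⟩
    · intro h
      rw [rwf_def] at h ⊢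
      obtain he | ⟨j, hj⟩ := h
      · exact Or.inl ⟨fun s => he.false s⟩
      · obtain j | k := j
        · exact Or.inr ⟨Sum.inl j, hj⟩
        · exact Or.inr ⟨Sum.inr k, fun hw => hj ((recR k).1.mp hw)⟩
termination_by X => X.birthday
decreasing_by
  all_goals first
    | exact PGame.birthday_moveLeft_lt _
    | exact PGame.birthday_moveRight_lt _

/-- Domination: removing a dominated left option `A = xL iA`
(dominated by `B = xL iB`, a distinct element of the set of left options) does not
change the equivalence class of `G` modulo `D⁻`. -/
theorem stmt9 (xl xr : Type) (xL : xl → PGame) (xR : xr → PGame)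
    (hs : IsShort (PGame.mk xl xr xL xR)) (hd : Dicot (PGame.mk xl xr xL xR))
    (iA iB : xl) (hne : ¬ (xL iB).Identical (xL iA)) (hAB : Dge (xL iB) (xL iA)) :
    Deq (PGame.mk xl xr xL xR)
      (PGame.mk {i : xl // ¬ (xL i).Identical (xL iA)} xr (fun i => xL i.1) xR) := fun X hs hd =>
  outcome_congr ((key xl xr xL xR iA iB hne hAB X hs hd).1)
    ((key xl xr xL xR iA iB hne hAB X hs hd).2)

end MisereDicot
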